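/- Let t > 0, σ₀ > 0, and let f : [0, t] → ℝ be continuous and not identically zero. For ρ ∈ ℝ define I(ρ) = ∫₀ᵗ σ₀ f(t − s) · ( −ρ f(t − s) / √(1 + ρ² f(t − s)²) ) ds. Then for every m ∈ ℝ with |m| < σ₀ ∫₀ᵗ |f(t − s)| ds there exists ρ ∈ ℝ such that I(ρ) = m. -/

import Mathlib

open Filter Real intervalIntegral
open scoped Topology

/-- pointwise bound -/
lemma stmt10_abs_le (σ₀ ρ c : ℝ) :
    |σ₀ * c * (-ρ * c / Real.sqrt (1 + ρ ^ 2 * c ^ 2))| ≤ |σ₀| * |c| := by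
  have hs : 0 < Real.sqrt (1 + ρ ^ 2 * c ^ 2) := Real.sqrt_pos.mpr (by positivity)
  have h1 : |ρ * c| ≤ Real.sqrt (1 + ρ ^ 2 * c ^ 2) := by
    rw [← Real.sqrt_sq_eq_abs]
    exact Real.sqrt_le_sqrt (by nlinarith)
  have h2 : |(-ρ * c / Real.sqrt (1 + ρ ^ 2 * c ^ 2))| ≤ 1 := by
    rw [abs_div, abs_of_pos hs, div_le_one hs]
    simpa [abs_mul] using h1
  calc |σ₀ * c * (-ρ * c / Real.sqrt (1 + ρ ^ 2 * c ^ 2))|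
      = |σ₀ * c| * |(-ρ * c / Real.sqrt (1 + ρ ^ 2 * c ^ 2))| := abs_mul _ _
    _ ≤ |σ₀ * c| * 1 := by gcongr
    _ = |σ₀| * |c| := by rw [mul_one, abs_mul]

/-- continuity in ρ -/
lemma stmt10_cont (σ₀ c : ℝ) :
    Continuous fun ρ : ℝ => σ₀ * c * (-ρ * c / Real.sqrt (1 + ρ ^ 2 * c ^ 2)) := by
  have hden : Continuous fun ρ : ℝ => Real.sqrt (1 + ρ ^ 2 * c ^ 2) :=
    Real.continuous_sqrt.comp (by fun_prop)
  exact continuous_const.mul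
    (Continuous.div (by fun_prop) hden fun ρ => (Real.sqrt_pos.mpr (by positivity)).ne')

/-- limit as ρ → ∞ -/
lemma stmt10_lim (σ₀ c : ℝ) :
    Tendsto (fun ρ : ℝ => σ₀ * c * (-ρ * c / Real.sqrt (1 + ρ ^ 2 * c ^ 2))) atTop
      (𝓝 (-(σ₀ * |c|))) := by
  rcases eq_or_ne c 0 with rfl | hc
  · simpa using tendsto_const_nhds
  have hc2 : (0:ℝ) < c ^ 2 := by positivity
  have h0 : Tendsto (fun ρ : ℝ => (ρ ^ 2)⁻¹) atTop (𝓝 0) :=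
    (tendsto_pow_atTop two_ne_zero).inv_tendsto_atTop
  have hca : ContinuousAt (fun u : ℝ => σ₀ * c * (-c / Real.sqrt (u + c ^ 2))) 0 := by
    apply ContinuousAt.mul continuousAt_const
    apply ContinuousAt.div continuousAt_const
    · exact (Real.continuous_sqrt.continuousAt).comp (by fun_prop)
    · simp only [zero_add]
      exact (Real.sqrt_pos.mpr hc2).ne'
  have hmain : Tendsto (fun ρ : ℝ => σ₀ * c * (-c / Real.sqrt ((ρ ^ 2)⁻¹ + c ^ 2))) atTop
      (𝓝 (σ₀ * c * (-c / Real.sqrt (0 + c ^ 2)))) := hca.tendsto.comp h0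
  have hval : σ₀ * c * (-c / Real.sqrt (0 + c ^ 2)) = -(σ₀ * |c|) := by
    rw [zero_add, Real.sqrt_sq_eq_abs]
    have : c * c = |c| * |c| := by rw [← abs_mul_abs_self]
    field_simp
    linear_combination (-σ₀) * this
  rw [← hval]
  apply hmain.congr'
  filter_upwards [eventually_gt_atTop (0:ℝ)] with ρ hρ
  have hsq : Real.sqrt (1 + ρ ^ 2 * c ^ 2) = ρ * Real.sqrt ((ρ ^ 2)⁻¹ + c ^ 2) := by
    rw [← Real.sqrt_sq hρ.le, ← Real.sqrt_mul (by positivity)]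
    congr 1
    field_simp
    ring
    rw [Real.sq_sqrt (by positivity)]
  rw [hsq, show -ρ * c = ρ * (-c) from by ring, mul_div_mul_left _ _ hρ.ne']


/-- continuity in c for fixed ρ -/
lemma stmt10_cont_s (σ₀ ρ : ℝ) :
    Continuous fun c : ℝ => σ₀ * c * (-ρ * c / Real.sqrt (1 + ρ ^ 2 * c ^ 2)) := by
  have hden : Continuous fun c : ℝ => Real.sqrt (1 + ρ ^ 2 * c ^ 2) :=
    Real.continuous_sqrt.comp (by fun_prop)
  exact Continuous.mul (by fun_prop)
    (Continuous.div (by fun_prop) hden fun c => (Real.sqrt_pos.mpr (by positivity)).ne')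

theorem stmt_10 (t σ₀ : ℝ) (ht : 0 < t) (hσ : 0 < σ₀) (f : ℝ → ℝ)
    (hf : ContinuousOn f (Set.Icc 0 t))
    (hne : ∃ s ∈ Set.Icc (0 : ℝ) t, f s ≠ 0)
    (m : ℝ) (hm : |m| < σ₀ * ∫ s in (0 : ℝ)..t, |f (t - s)|) :
    ∃ ρ : ℝ,
      (∫ s in (0 : ℝ)..t,
        σ₀ * f (t - s) * (-ρ * f (t - s) / Real.sqrt (1 + ρ ^ 2 * f (t - s) ^ 2))) = m := by
  -- continuous extension of f by clamping
  set F : ℝ → ℝ := fun x => f (max 0 (min x t)) with hF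
  have hclamp : ∀ x ∈ Set.Icc (0:ℝ) t, max 0 (min x t) = x := by
    intro x hx
    rw [min_eq_left hx.2, max_eq_right hx.1]
  have hFeq : ∀ x ∈ Set.Icc (0:ℝ) t, F x = f x := fun x hx => by
    simp [hF, hclamp x hx]
  have hFcont : Continuous F := by
    apply hf.comp_continuous (by fun_prop)
    intro x
    exact ⟨le_max_left _ _, max_le (le_of_lt ht) (min_le_right _ _)⟩
  set g : ℝ → ℝ := fun s => F (t - s) with hg
  have hgcont : Continuous g := hFcont.comp (by fun_prop)
  have hmem : ∀ s ∈ Set.uIcc (0:ℝ) t, t - s ∈ Set.Icc (0:ℝ) t := by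
    intro s hs
    rw [Set.uIcc_of_le ht.le] at hs
    exact ⟨by linarith [hs.2], by linarith [hs.1]⟩
  set I : ℝ → ℝ := fun ρ => ∫ s in (0:ℝ)..t,
      σ₀ * g s * (-ρ * g s / Real.sqrt (1 + ρ ^ 2 * g s ^ 2)) with hI
  set L : ℝ := σ₀ * ∫ s in (0:ℝ)..t, |g s| with hL
  have hmL : |m| < L := by
    have : (∫ s in (0:ℝ)..t, |f (t - s)|) = ∫ s in (0:ℝ)..t, |g s| := by
      apply intervalIntegral.integral_congr
      intro s hs
      rw [hg]; simp only [hFeq _ (hmem s hs)]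
    rwa [this] at hm
  -- DCT ingredients
  have hmeas : ∀ ρ : ℝ, MeasureTheory.AEStronglyMeasurable
      (fun s => σ₀ * g s * (-ρ * g s / Real.sqrt (1 + ρ ^ 2 * g s ^ 2)))
      (MeasureTheory.volume.restrict (Set.uIoc (0:ℝ) t)) := by
    intro ρ
    exact ((stmt10_cont_s σ₀ ρ).comp hgcont).aestronglyMeasurable
  have hbound : ∀ ρ : ℝ, ∀ᵐ s ∂MeasureTheory.volume, s ∈ Set.uIoc (0:ℝ) t →
      ‖σ₀ * g s * (-ρ * g s / Real.sqrt (1 + ρ ^ 2 * g s ^ 2))‖ ≤ σ₀ * |g s| := by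
    intro ρ
    filter_upwards with s _
    have := stmt10_abs_le σ₀ ρ (g s)
    rwa [abs_of_pos hσ] at this
  have hbint : IntervalIntegrable (fun s => σ₀ * |g s|) MeasureTheory.volume 0 t :=
    (continuous_const.mul hgcont.abs).intervalIntegrable 0 t
  -- limit at atTop
  have htop : Tendsto I atTop (𝓝 (-L)) := by
    have h1 : Tendsto I atTop (𝓝 (∫ s in (0:ℝ)..t, -(σ₀ * |g s|))) := by
      apply intervalIntegral.tendsto_integral_filter_of_dominated_convergence
        (fun s => σ₀ * |g s|) (Eventually.of_forall hmeas) (Eventually.of_forall hbound) hbint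
      filter_upwards with s _
      exact stmt10_lim σ₀ (g s)
    have h2 : (∫ s in (0:ℝ)..t, -(σ₀ * |g s|)) = -L := by
      rw [intervalIntegral.integral_neg, hL, intervalIntegral.integral_const_mul]
    rwa [h2] at h1
  -- continuity of I
  have hIcont : Continuous I := by
    rw [continuous_iff_continuousAt]
    intro ρ₀
    apply intervalIntegral.tendsto_integral_filter_of_dominated_convergence
      (fun s => σ₀ * |g s|) (Eventually.of_forall hmeas) (Eventually.of_forall hbound) hbint
    filter_upwards with s _
    exact ((stmt10_cont σ₀ (g s)).tendsto ρ₀)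
  -- oddness
  have hodd : ∀ ρ : ℝ, I (-ρ) = -I ρ := by
    intro ρ
    rw [hI]
    simp only
    rw [← intervalIntegral.integral_neg]
    apply intervalIntegral.integral_congr
    intro s _
    rw [show (-ρ:ℝ) ^ 2 = ρ ^ 2 from by ring]
    ring
  -- find a with I a < m and b with I b > m
  have hLm : -L < m := by cases abs_lt.mp hmL; linarith
  have hmL2 : m < L := (abs_lt.mp hmL).2
  obtain ⟨a, ha⟩ : ∃ a, I a < m := (htop.eventually_lt_const hLm).exists
  obtain ⟨a', ha'⟩ : ∃ a', I a' < -m := by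
    refine (htop.eventually_lt_const ?_).exists
    linarith
  have hb : m < I (-a') := by rw [hodd]; linarith
  -- IVT
  have hmem2 : m ∈ Set.uIcc (I a) (I (-a')) :=
    Set.mem_uIcc.mpr (Or.inl ⟨ha.le, hb.le⟩)
  obtain ⟨ρ, -, hρ⟩ := intermediate_value_uIcc hIcont.continuousOn hmem2
  refine ⟨ρ, ?_⟩
  rw [show (∫ s in (0:ℝ)..t,
        σ₀ * f (t - s) * (-ρ * f (t - s) / Real.sqrt (1 + ρ ^ 2 * f (t - s) ^ 2))) = I ρ from ?_]
  · exact hρ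
  · apply intervalIntegral.integral_congr
    intro s hs
    rw [hg]; simp only [hFeq _ (hmem s hs)]
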